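/- Let f be a bounded real-valued symbol on the unit circle that is not almost-everywhere equal to a constant, and let s = ess sup f. Then s is not an eigenvalue of T_n(f) for any n ≥ 1; i.e., every eigenvalue λ of T_n(f) satisfies λ < ess sup f. -/

import Mathlib

open MeasureTheory Real

/-- The j-th Fourier coefficient of a function on the unit circle. -/
noncomputable def fourierCoef (f : ℝ → ℂ) (j : ℤ) : ℂ :=
  (1 / (2 * Real.pi)) * ∫ θ in (0:ℝ)..(2 * Real.pi),
    f θ * Complex.exp (-Complex.I * (j : ℂ) * (θ : ℂ))

/-- The `n × n` Toeplitz matrix associated to a real-valued symbol. -/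
noncomputable def toeplitzR (n : ℕ) (f : ℝ → ℝ) : Matrix (Fin n) (Fin n) ℂ :=
  Matrix.of fun j k => fourierCoef (fun θ => (f θ : ℂ)) ((j : ℤ) - (k : ℤ))

lemma injOn_exp_I : Set.InjOn (fun θ : ℝ => Complex.exp (Complex.I * θ))
    (Set.Ioc 0 (2*Real.pi)) := by
  intro a ha b hb hab
  obtain ⟨k, hk⟩ := Complex.exp_eq_exp_iff_exists_int.mp hab
  have him : a = b + k * (2*Real.pi) := by
    have := congrArg Complex.im hk
    simpa [Complex.add_im, Complex.mul_im] using this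
  have hk0 : (k:ℝ) = 0 := by
    have hpi := Real.pi_pos
    rcases ha with ⟨ha1, ha2⟩; rcases hb with ⟨hb1, hb2⟩
    by_contra hne
    rcases lt_or_gt_of_ne hne with hlt | hgt
    · have : (k:ℝ) ≤ -1 := by
        have hk' : k < 0 := by exact_mod_cast hlt
        have hk2 : k ≤ -1 := by omega
        exact_mod_cast hk2
      nlinarith
    · have : (1:ℝ) ≤ k := by
        have hk' : 0 < k := by exact_mod_cast hgt
        have hk2 : 1 ≤ k := by omega
        exact_mod_cast hk2
      nlinarith
  rw [him, hk0]; ring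

lemma finite_zeros (n : ℕ) (v : Fin n → ℂ) (hv : v ≠ 0) :
    {θ ∈ Set.Ioc (0:ℝ) (2*Real.pi) |
      ∑ j : Fin n, v j * Complex.exp (Complex.I * ((j:ℕ):ℂ) * θ) = 0}.Finite := by
  set P : Polynomial ℂ := ∑ j : Fin n, Polynomial.C (v j) * Polynomial.X ^ (j:ℕ) with hPdef
  have hcoeff : ∀ j : Fin n, P.coeff (j:ℕ) = v j := by
    intro j
    rw [hPdef, Polynomial.finset_sum_coeff]
    rw [Finset.sum_eq_single j]
    · simp
    · intro k _ hkj
      simp [Polynomial.coeff_C_mul, Polynomial.coeff_X_pow,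
        fun h => hkj (Fin.val_injective h)]
      intro h; exact absurd (Fin.val_injective h.symm) hkj
    · simp
  have hP : P ≠ 0 := by
    obtain ⟨j, hj⟩ := Function.ne_iff.mp hv
    intro h0
    exact hj (by simpa [h0] using (hcoeff j).symm)
  have heval : ∀ θ : ℝ, P.eval (Complex.exp (Complex.I * θ))
      = ∑ j : Fin n, v j * Complex.exp (Complex.I * ((j:ℕ):ℂ) * θ) := by
    intro θ
    rw [hPdef, Polynomial.eval_finset_sum]
    refine Finset.sum_congr rfl fun j _ => ?_
    rw [Polynomial.eval_mul, Polynomial.eval_C, Polynomial.eval_pow, Polynomial.eval_X,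
      ← Complex.exp_nat_mul]
    ring_nf
  refine Set.Finite.of_finite_image ?_
    (injOn_exp_I.mono (by intro x hx; exact hx.1))
  refine Set.Finite.subset (P.roots.toFinset.finite_toSet) ?_
  rintro z ⟨θ, hθ, rfl⟩
  simp only [Multiset.mem_toFinset, Finset.coe_sort_coe]
  exact Multiset.mem_toFinset.mpr ((Polynomial.mem_roots hP).mpr (by rw [Polynomial.IsRoot, heval]; exact hθ.2))

lemma E_mul (m m' : ℤ) (θ : ℝ) :
    Complex.exp (Complex.I * m * θ) * Complex.exp (Complex.I * m' * θ)
      = Complex.exp (Complex.I * (↑(m + m') : ℂ) * θ) := by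
  rw [← Complex.exp_add]; push_cast; ring_nf

lemma conj_E (m : ℤ) (θ : ℝ) :
    (starRingEnd ℂ) (Complex.exp (Complex.I * m * θ))
      = Complex.exp (Complex.I * (↑(-m) : ℂ) * θ) := by
  rw [← Complex.exp_conj]
  congr 1
  simp only [map_mul, Complex.conj_I, map_intCast, Complex.conj_ofReal]
  push_cast; ring

lemma norm_E (m : ℤ) (θ : ℝ) : ‖Complex.exp (Complex.I * m * θ)‖ = 1 := by
  rw [Complex.norm_exp]
  have : (Complex.I * m * θ).re = 0 := by simp [Complex.mul_re, Complex.mul_im]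
  rw [this, Real.exp_zero]

lemma integrable_mul_E (f : ℝ → ℝ) (hf : Measurable f) {C : ℝ} (hC : ∀ θ, |f θ| ≤ C)
    (m : ℤ) : IntegrableOn (fun θ => (f θ : ℂ) * Complex.exp (Complex.I * m * θ))
      (Set.Ioc 0 (2*Real.pi)) volume := by
  have hmeas : Measurable (fun θ : ℝ => (f θ : ℂ) * Complex.exp (Complex.I * m * θ)) :=
    (Complex.measurable_ofReal.comp hf).mul
      (Complex.continuous_exp.comp (by continuity)).measurable
  refine Integrable.mono' (g := fun _ => C)
    (integrableOn_const measure_Ioc_lt_top.ne) hmeas.aestronglyMeasurable ?_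
  refine ae_of_all _ fun θ => ?_
  rw [norm_mul, norm_E, mul_one, Complex.norm_real]
  exact hC θ

lemma integral_E_Ioc (m : ℤ) :
    (∫ θ in Set.Ioc (0:ℝ) (2*Real.pi), Complex.exp (Complex.I * m * θ) ∂volume)
      = if m = 0 then (2*Real.pi : ℂ) else 0 := by
  have h0 : (0:ℝ) ≤ 2*Real.pi := by positivity
  rcases eq_or_ne m 0 with hm | hm
  · simp [hm, ENNReal.toReal_ofReal h0, max_eq_left h0]
  · rw [if_neg hm]
    have hc : (Complex.I * m : ℂ) ≠ 0 :=
      mul_ne_zero Complex.I_ne_zero (Int.cast_ne_zero.mpr hm)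
    have h1 := integral_exp_mul_complex (a := 0) (b := 2*Real.pi) hc
    rw [intervalIntegral.integral_of_le h0] at h1
    simp only [mul_assoc] at h1 ⊢
    rw [h1]
    have h2 : Complex.I * ((m:ℂ) * ((2*Real.pi : ℝ) : ℂ)) = (m:ℤ) * (2 * Real.pi * Complex.I) := by
      push_cast; ring
    rw [h2, Complex.exp_int_mul_two_pi_mul_I]
    simp

lemma conj_h_mul_h (n : ℕ) (v : Fin n → ℂ) (θ : ℝ) :
    (starRingEnd ℂ) (∑ j : Fin n, v j * Complex.exp (Complex.I * ((j:ℕ):ℂ) * θ))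
        * (∑ j : Fin n, v j * Complex.exp (Complex.I * ((j:ℕ):ℂ) * θ))
      = ∑ j : Fin n, ∑ k : Fin n, ((starRingEnd ℂ) (v j) * v k)
          * Complex.exp (Complex.I * (↑((k:ℤ) - (j:ℤ)) : ℂ) * θ) := by
  rw [map_sum, Finset.sum_mul_sum]
  refine Finset.sum_congr rfl fun j _ => Finset.sum_congr rfl fun k _ => ?_
  have hj : ((j:ℕ):ℂ) = ((((j:ℕ):ℤ)):ℂ) := by push_cast; ring
  have hk : ((k:ℕ):ℂ) = ((((k:ℕ):ℤ)):ℂ) := by push_cast; ring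
  rw [map_mul, hj, hk, conj_E]
  rw [show (starRingEnd ℂ) (v j) * Complex.exp (Complex.I * (↑(-(j:ℤ)):ℂ) * θ)
        * (v k * Complex.exp (Complex.I * (↑((k:ℤ)):ℂ) * θ))
      = ((starRingEnd ℂ) (v j) * v k)
        * (Complex.exp (Complex.I * (↑(-(j:ℤ)):ℂ) * θ) * Complex.exp (Complex.I * (↑((k:ℤ)):ℂ) * θ)) by ring,
    E_mul]
  congr 3
  ring

lemma parseval (n : ℕ) (v : Fin n → ℂ) :
    (∫ θ in Set.Ioc (0:ℝ) (2*Real.pi),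
        (starRingEnd ℂ) (∑ j : Fin n, v j * Complex.exp (Complex.I * ((j:ℕ):ℂ) * θ))
          * (∑ j : Fin n, v j * Complex.exp (Complex.I * ((j:ℕ):ℂ) * θ)) ∂volume)
      = (2*Real.pi : ℂ) * ∑ j : Fin n, (Complex.normSq (v j) : ℂ) := by
  have hint : ∀ (j k : Fin n), IntegrableOn
      (fun θ : ℝ => ((starRingEnd ℂ) (v j) * v k)
        * Complex.exp (Complex.I * (↑((k:ℤ) - (j:ℤ)) : ℂ) * θ))
      (Set.Ioc 0 (2*Real.pi)) volume := by
    intro j k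
    exact (Continuous.integrableOn_Ioc (by continuity))
  calc (∫ θ in Set.Ioc (0:ℝ) (2*Real.pi), _ ∂volume)
      = ∫ θ in Set.Ioc (0:ℝ) (2*Real.pi), (∑ j : Fin n, ∑ k : Fin n,
          ((starRingEnd ℂ) (v j) * v k)
            * Complex.exp (Complex.I * (↑((k:ℤ) - (j:ℤ)) : ℂ) * θ)) ∂volume := by
        exact setIntegral_congr_fun measurableSet_Ioc fun θ _ => conj_h_mul_h n v θ
    _ = ∑ j : Fin n, ∑ k : Fin n, ((starRingEnd ℂ) (v j) * v k)
          * ∫ θ in Set.Ioc (0:ℝ) (2*Real.pi),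
              Complex.exp (Complex.I * (↑((k:ℤ) - (j:ℤ)) : ℂ) * θ) ∂volume := by
        rw [integral_finset_sum _ (fun j _ => integrable_finset_sum _ (fun k _ => hint j k))]
        exact Finset.sum_congr rfl fun j _ => by
          rw [integral_finset_sum _ (fun k _ => hint j k)]
          exact Finset.sum_congr rfl fun k _ => integral_const_mul _ _
    _ = ∑ j : Fin n, ∑ k : Fin n, ((starRingEnd ℂ) (v j) * v k)
          * (if (k:ℤ) - (j:ℤ) = 0 then (2*Real.pi : ℂ) else 0) := by
        exact Finset.sum_congr rfl fun j _ => Finset.sum_congr rfl fun k _ => by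
          rw [integral_E_Ioc]
    _ = ∑ j : Fin n, ((starRingEnd ℂ) (v j) * v j) * (2*Real.pi : ℂ) := by
        refine Finset.sum_congr rfl fun j _ => ?_
        rw [Finset.sum_eq_single j
          (fun k _ hkj => by rw [if_neg (fun hc => hkj (Fin.ext (by omega))), mul_zero])
          (fun hj => absurd (Finset.mem_univ j) hj)]
        rw [if_pos (sub_self _)]
    _ = (2*Real.pi : ℂ) * ∑ j : Fin n, (Complex.normSq (v j) : ℂ) := by
        rw [Finset.mul_sum]
        refine Finset.sum_congr rfl fun j _ => ?_
        rw [← Complex.normSq_eq_conj_mul_self]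
        ring

lemma fourierCoef_eq (f : ℝ → ℝ) (m : ℤ) :
    fourierCoef (fun θ => (f θ : ℂ)) m
      = (1/(2*Real.pi) : ℂ) * ∫ θ in Set.Ioc (0:ℝ) (2*Real.pi),
          (f θ : ℂ) * Complex.exp (Complex.I * (↑(-m) : ℂ) * θ) ∂volume := by
  rw [fourierCoef, intervalIntegral.integral_of_le (by positivity)]
  congr 1
  refine setIntegral_congr_fun measurableSet_Ioc fun θ _ => ?_
  congr 1
  congr 1
  push_cast
  ring

lemma quad_form (n : ℕ) (f : ℝ → ℝ) (hf : Measurable f) {C : ℝ} (hC : ∀ θ, |f θ| ≤ C)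
    (v : Fin n → ℂ) :
    ∑ j : Fin n, (starRingEnd ℂ) (v j) * ((toeplitzR n f).mulVec v j)
      = (1/(2*Real.pi) : ℂ) * ∫ θ in Set.Ioc (0:ℝ) (2*Real.pi),
          (f θ : ℂ) * ((starRingEnd ℂ) (∑ j : Fin n, v j * Complex.exp (Complex.I * ((j:ℕ):ℂ) * θ))
            * (∑ j : Fin n, v j * Complex.exp (Complex.I * ((j:ℕ):ℂ) * θ))) ∂volume := by
  have hint : ∀ m : ℤ, IntegrableOn (fun θ => (f θ : ℂ) * Complex.exp (Complex.I * m * θ))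
      (Set.Ioc 0 (2*Real.pi)) volume := integrable_mul_E f hf hC
  have step1 : ∑ j : Fin n, (starRingEnd ℂ) (v j) * ((toeplitzR n f).mulVec v j)
      = ∑ j : Fin n, ∑ k : Fin n, ((starRingEnd ℂ) (v j) * v k) * ((1/(2*Real.pi) : ℂ) *
          ∫ θ in Set.Ioc (0:ℝ) (2*Real.pi),
            (f θ : ℂ) * Complex.exp (Complex.I * (↑((k:ℤ) - (j:ℤ)) : ℂ) * θ) ∂volume) := by
    refine Finset.sum_congr rfl fun j _ => ?_
    simp only [Matrix.mulVec, dotProduct]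
    rw [Finset.mul_sum]
    refine Finset.sum_congr rfl fun k _ => ?_
    show (starRingEnd ℂ) (v j) * (toeplitzR n f j k * v k) = _
    rw [toeplitzR, Matrix.of_apply, fourierCoef_eq, neg_sub]
    ring
  rw [step1]
  have step2 : ∀ θ : ℝ, (f θ : ℂ) * ((starRingEnd ℂ) (∑ j : Fin n, v j * Complex.exp (Complex.I * ((j:ℕ):ℂ) * θ))
        * (∑ j : Fin n, v j * Complex.exp (Complex.I * ((j:ℕ):ℂ) * θ)))
      = ∑ j : Fin n, ∑ k : Fin n, ((starRingEnd ℂ) (v j) * v k) *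
          ((f θ : ℂ) * Complex.exp (Complex.I * (↑((k:ℤ) - (j:ℤ)) : ℂ) * θ)) := by
    intro θ
    rw [conj_h_mul_h, Finset.mul_sum]
    refine Finset.sum_congr rfl fun j _ => ?_
    rw [Finset.mul_sum]
    refine Finset.sum_congr rfl fun k _ => ?_
    ring
  rw [setIntegral_congr_fun measurableSet_Ioc (fun θ _ => step2 θ)]
  rw [integral_finset_sum _ (fun j _ => integrable_finset_sum _
    (fun k _ => ((hint _).const_mul _)))]
  rw [Finset.mul_sum]
  refine Finset.sum_congr rfl fun j _ => ?_
  rw [integral_finset_sum _ (fun k _ => ((hint _).const_mul _)), Finset.mul_sum]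
  refine Finset.sum_congr rfl fun k _ => ?_
  rw [integral_const_mul]
  ring

/-- If the bounded real-valued symbol `f` is not a.e. constant, then
`s = ess sup f` is not an eigenvalue of `T_n(f)`: every eigenvalue is real
and is strictly less than `ess sup f`. -/
theorem toeplitz_eigenvalue_lt_essSup (n : ℕ) (hn : 1 ≤ n) (f : ℝ → ℝ)
    (hf : Measurable f) (hbd : ∃ C, ∀ θ, |f θ| ≤ C)
    (hnc : ¬ ∃ c : ℝ, f =ᵐ[volume.restrict (Set.Ioc 0 (2 * Real.pi))] fun _ => c)
    (lam : ℂ) (v : Fin n → ℂ) (hv : v ≠ 0)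
    (heig : (toeplitzR n f).mulVec v = lam • v) :
    lam.im = 0 ∧ lam.re < essSup f (volume.restrict (Set.Ioc 0 (2 * Real.pi))) := by
  obtain ⟨C, hC⟩ := hbd
  have hC0 : 0 ≤ C := (abs_nonneg _).trans (hC 0)
  have hπ : (0:ℝ) < 2*Real.pi := by positivity
  set μ := volume.restrict (Set.Ioc (0:ℝ) (2 * Real.pi)) with hμ
  set s := essSup f μ with hs
  set h : ℝ → ℂ := fun θ => ∑ j : Fin n, v j * Complex.exp (Complex.I * ((j:ℕ):ℂ) * θ) with hh
  have hhcont : Continuous h := by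
    apply continuous_finset_sum
    intro j _
    exact continuous_const.mul (Complex.continuous_exp.comp (by continuity))
  set H : ℝ → ℝ := fun θ => Complex.normSq (h θ) with hH
  have hHcont : Continuous H := Complex.continuous_normSq.comp hhcont
  set S : ℝ := ∑ j : Fin n, Complex.normSq (v j) with hS
  have hSpos : 0 < S := by
    obtain ⟨j, hj⟩ := Function.ne_iff.mp hv
    exact Finset.sum_pos' (fun i _ => Complex.normSq_nonneg _)
      ⟨j, Finset.mem_univ j, Complex.normSq_pos.mpr hj⟩
  -- left side via eigenvalue equation
  have hL : ∑ j : Fin n, (starRingEnd ℂ) (v j) * ((toeplitzR n f).mulVec v j)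
      = lam * (S:ℂ) := by
    rw [heig]
    simp only [Pi.smul_apply, smul_eq_mul]
    rw [hS]
    push_cast
    rw [Finset.mul_sum]
    refine Finset.sum_congr rfl fun j _ => ?_
    rw [Complex.normSq_eq_conj_mul_self]
    ring
  -- quadratic form identity
  have hQ := quad_form n f hf hC v
  have hQ' : lam * (S:ℂ) = ((1/(2*Real.pi)) * ∫ θ, f θ * H θ ∂μ : ℝ) := by
    rw [← hL, hQ]
    have : ∀ θ : ℝ, (f θ : ℂ) * ((starRingEnd ℂ) (h θ) * h θ) = ((f θ * H θ : ℝ) : ℂ) := by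
      intro θ
      rw [← Complex.normSq_eq_conj_mul_self]
      push_cast
      ring
    rw [setIntegral_congr_fun measurableSet_Ioc (fun θ _ => this θ)]
    have hcast : (∫ x in Set.Ioc (0:ℝ) (2*Real.pi), ((f x * H x : ℝ) : ℂ) ∂volume)
        = ((∫ θ, f θ * H θ ∂μ : ℝ) : ℂ) := integral_ofReal
    rw [hcast]
    push_cast
    ring
  have him : lam.im = 0 := by
    have := congrArg Complex.im hQ'
    simp only [Complex.mul_im, Complex.ofReal_im, Complex.ofReal_re, mul_zero, add_zero,
      zero_add] at this
    rcases mul_eq_zero.mp this with h0 | h0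
    · exact h0
    · exact absurd h0 hSpos.ne'
  have hre : lam.re * S = (1/(2*Real.pi)) * ∫ θ, f θ * H θ ∂μ := by
    have := congrArg Complex.re hQ'
    simpa [Complex.mul_re, him] using this
  -- Parseval
  have hPar : ∫ θ, H θ ∂μ = 2*Real.pi * S := by
    have hp := parseval n v
    have : ∀ θ : ℝ, (starRingEnd ℂ) (h θ) * h θ = ((H θ : ℝ) : ℂ) := fun θ =>
      (Complex.normSq_eq_conj_mul_self).symm
    rw [setIntegral_congr_fun measurableSet_Ioc (fun θ _ => this θ)] at hp
    have hcast : (∫ x in Set.Ioc (0:ℝ) (2*Real.pi), ((H x : ℝ) : ℂ) ∂volume)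
        = ((∫ θ, H θ ∂μ : ℝ) : ℂ) := integral_ofReal
    rw [hcast] at hp
    have : ((∫ θ, H θ ∂μ : ℝ) : ℂ) = ((2*Real.pi * S : ℝ) : ℂ) := by
      rw [hp, hS]; push_cast; ring
    exact_mod_cast this
  -- a.e. bound f ≤ s
  have hfs : ∀ᵐ θ ∂μ, f θ ≤ s :=
    eventually_le_limsup ⟨C, Filter.eventually_map.2
      (ae_of_all _ fun θ => (abs_le.mp (hC θ)).2)⟩
  -- integrability
  have hμfin : μ (Set.univ) < ⊤ := by
    rw [hμ, Measure.restrict_apply_univ]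
    exact measure_Ioc_lt_top
  have hB : ∀ θ, H θ ≤ (∑ j : Fin n, ‖v j‖)^2 := by
    intro θ
    have h1 : ‖h θ‖ ≤ ∑ j : Fin n, ‖v j‖ := by
      show ‖∑ j : Fin n, v j * Complex.exp (Complex.I * ((j:ℕ):ℂ) * θ)‖ ≤ _
      refine (norm_sum_le _ _).trans ?_
      refine Finset.sum_le_sum fun j _ => ?_
      rw [norm_mul]
      have hc : ((j:ℕ):ℂ) = (((j:ℕ):ℤ):ℂ) := by push_cast; ring
      rw [hc, norm_E, mul_one]
    show Complex.normSq (h θ) ≤ _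
    rw [Complex.normSq_eq_norm_sq]
    exact pow_le_pow_left₀ (norm_nonneg _) h1 2
  have hHmeas : Measurable H := hHcont.measurable
  have hint_sub : Integrable (fun θ => (s - f θ) * H θ) μ := by
    refine Integrable.mono' (g := fun _ => (|s| + C) * (∑ j : Fin n, ‖v j‖)^2)
      (integrable_const _) ((measurable_const.sub hf).mul hHmeas).aestronglyMeasurable ?_
    refine ae_of_all _ fun θ => ?_
    rw [Real.norm_eq_abs, abs_mul, abs_of_nonneg (Complex.normSq_nonneg _)]
    have h1 : |s - f θ| ≤ |s| + C := (abs_sub _ _).trans (by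
      have := hC θ; linarith [abs_nonneg (f θ)])
    exact mul_le_mul h1 (hB θ) (Complex.normSq_nonneg _) (by linarith [abs_nonneg s])
  have hint_H : Integrable H μ := by
    rw [hμ]
    exact Continuous.integrableOn_Ioc hHcont
  have hint_fH : Integrable (fun θ => f θ * H θ) μ := by
    have : (fun θ => f θ * H θ) = fun θ => s * H θ - (s - f θ) * H θ := by
      funext θ; ring
    rw [this]
    exact (hint_H.const_mul s).sub hint_sub
  -- the key nonnegative integral
  have hDval : ∫ θ, (s - f θ) * H θ ∂μ = 2*Real.pi * S * (s - lam.re) := by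
    have : (fun θ => (s - f θ) * H θ) = fun θ => s * H θ - f θ * H θ := by
      funext θ; ring
    rw [this, integral_sub (hint_H.const_mul s) hint_fH, integral_const_mul, hPar]
    have h2 : ∫ θ, f θ * H θ ∂μ = 2*Real.pi*(lam.re*S) := by
      rw [hre]
      field_simp
    rw [h2]
    ring
  have hnonneg : ∀ᵐ θ ∂μ, 0 ≤ (s - f θ) * H θ :=
    hfs.mono fun θ hθ => mul_nonneg (by linarith) (Complex.normSq_nonneg _)
  have hane : ∀ᵐ θ ∂μ, h θ ≠ 0 := by
    rw [ae_iff]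
    have hset : {θ : ℝ | ¬ h θ ≠ 0} = {θ : ℝ | h θ = 0} := by simp
    rw [hset, hμ, Measure.restrict_apply' measurableSet_Ioc]
    refine measure_mono_null ?_ ((finite_zeros n v hv).measure_zero volume)
    rintro θ ⟨h1, h2⟩
    exact ⟨h2, h1⟩
  have hDne : (∫ θ, (s - f θ) * H θ ∂μ) ≠ 0 := by
    intro h0
    have hz := (integral_eq_zero_iff_of_nonneg_ae hnonneg hint_sub).mp h0
    apply hnc
    refine ⟨s, ?_⟩
    filter_upwards [hz, hane] with θ h1 h2
    have h1' : (s - f θ) * H θ = 0 := h1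
    rcases mul_eq_zero.mp h1' with h3 | h3
    · have : f θ = s := by linarith
      exact this
    · exact absurd (Complex.normSq_eq_zero.mp h3) h2
  have hDpos : 0 < ∫ θ, (s - f θ) * H θ ∂μ :=
    lt_of_le_of_ne (integral_nonneg_of_ae hnonneg) (Ne.symm hDne)
  rw [hDval] at hDpos
  refine ⟨him, ?_⟩
  have h2πS : 0 < 2*Real.pi*S := by positivity
  nlinarith [h2πS]
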